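/- Let F be a field of characteristic zero, A = F[x,y], n > 1. Every element of the kernel of d²(a,b) = y^{n-1}(∂a/∂x + y·∂b/∂y) − (n−1)·y^{n-1}·b can be written uniquely as μ(b) + (α(y), 0) with b ∈ A and α(y) ∈ F[y], where μ(b) = (∫((n−1)b − y·∂b/∂y) dx, b). -/

import Mathlib

open MvPolynomial

noncomputable section

/-- Antiderivative in `x` with zero constant-in-`x` term. -/
def antiX (F : Type*) [Field F] :
    MvPolynomial (Fin 2) F →ₗ[F] MvPolynomial (Fin 2) F :=
  (Finsupp.lsum F fun m : Fin 2 →₀ ℕ =>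
    (((m 0 : F) + 1)⁻¹) •
      (MvPolynomial.monomial (m + Finsupp.single 0 1) : F →ₗ[F] MvPolynomial (Fin 2) F))
    ∘ₗ (AddMonoidAlgebra.coeffLinearEquiv F).toLinearMap

/-- `μ(b) = (∫((n−1)b − y·∂b/∂y) dx, b)`. -/
def mu (F : Type*) [Field F] (n : ℕ) (b : MvPolynomial (Fin 2) F) :
    MvPolynomial (Fin 2) F × MvPolynomial (Fin 2) F :=
  (antiX F (C ((n : F) - 1) * b - X 1 * pderiv 1 b), b)

/-- `d²(a,b) = y^{n-1}(∂a/∂x + y·∂b/∂y) − (n−1)·y^{n-1}·b`. -/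
def d2 (F : Type*) [Field F] (n : ℕ)
    (p : MvPolynomial (Fin 2) F × MvPolynomial (Fin 2) F) : MvPolynomial (Fin 2) F :=
  X 1 ^ (n - 1) * (pderiv 0 p.1 + X 1 * pderiv 1 p.2) - C ((n : F) - 1) * X 1 ^ (n - 1) * p.2

lemma antiX_monomial (F : Type*) [Field F] (m : Fin 2 →₀ ℕ) (c : F) :
    antiX F (monomial m c) =
      (((m 0 : F) + 1)⁻¹) • monomial (m + Finsupp.single 0 1) c := by
  rw [antiX, ← single_eq_monomial]
  exact Finsupp.lsum_single F _ _ _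

/-- Every polynomial is `antiX (∂ₓ p)` plus a polynomial in `y` alone. -/
lemma exists_alpha (F : Type*) [Field F] [CharZero F] (p : MvPolynomial (Fin 2) F) :
    ∃ α : Polynomial F,
      p = antiX F (pderiv 0 p) + Polynomial.aeval (X 1 : MvPolynomial (Fin 2) F) α := by
  induction p using MvPolynomial.induction_on' with
  | add p q hp hq =>
    obtain ⟨α, hα⟩ := hp
    obtain ⟨β, hβ⟩ := hq
    refine ⟨α + β, ?_⟩
    rw [map_add, map_add, map_add]
    linear_combination hα + hβ
  | monomial u c =>
    by_cases hu : u 0 = 0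
    · refine ⟨Polynomial.C c * Polynomial.X ^ (u 1), ?_⟩
      have hp : pderiv 0 (monomial u c) = 0 := by
        rw [pderiv_monomial, hu]; simp
      have hu2 : u = Finsupp.single 1 (u 1) := by
        ext i
        fin_cases i
        · simp [hu]
        · simp
      rw [hp, map_zero, zero_add, map_mul, Polynomial.aeval_C, map_pow, Polynomial.aeval_X,
        MvPolynomial.algebraMap_eq, C_mul_X_pow_eq_monomial, ← hu2]
    · refine ⟨0, ?_⟩
      rw [map_zero, add_zero, pderiv_monomial, antiX_monomial]
      have h1 : (u - Finsupp.single 0 1 : Fin 2 →₀ ℕ) 0 = u 0 - 1 := by simp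
      have h2 : u - Finsupp.single 0 1 + Finsupp.single 0 1 = u := by
        ext i
        fin_cases i
        · simp [Nat.sub_add_cancel (Nat.one_le_iff_ne_zero.2 hu)]
        · simp
      rw [h1, h2, smul_monomial]
      congr 1
      have : ((u 0 - 1 : ℕ) : F) + 1 = (u 0 : F) := by
        have := Nat.sub_add_cancel (Nat.one_le_iff_ne_zero.2 hu)
        push_cast [this]
        exact_mod_cast congrArg (Nat.cast : ℕ → F) this
      rw [this]
      have hne : (u 0 : F) ≠ 0 := Nat.cast_ne_zero.2 hu
      field_simp
      rw [smul_eq_mul]; field_simp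

lemma aeval_X1_injective (F : Type*) [Field F] :
    Function.Injective (Polynomial.aeval (R := F) (X 1 : MvPolynomial (Fin 2) F)) := by
  have h : ((MvPolynomial.aeval (R := F) (S₁ := Polynomial F) ![0, Polynomial.X]).comp
      (Polynomial.aeval (X 1 : MvPolynomial (Fin 2) F))) = AlgHom.id F (Polynomial F) := by
    apply Polynomial.algHom_ext
    simp
  intro p q hpq
  have hp := AlgHom.congr_fun h p
  have hq := AlgHom.congr_fun h q
  simp only [AlgHom.comp_apply, AlgHom.id_apply] at hp hq
  rw [← hp, ← hq, hpq]

/-- Every element of `Ker d²` is uniquely of the form `μ(b) + (α(y), 0)`. -/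
theorem stmt4 (F : Type*) [Field F] [CharZero F] (n : ℕ) (hn : 1 < n)
    (a b : MvPolynomial (Fin 2) F) (h : d2 F n (a, b) = 0) :
    ∃! q : MvPolynomial (Fin 2) F × Polynomial F,
      (a, b) = mu F n q.1 +
        (Polynomial.aeval (X 1 : MvPolynomial (Fin 2) F) q.2, 0) := by
  have key : pderiv 0 a = C ((n : F) - 1) * b - X 1 * pderiv 1 b := by
    have h' : (X 1 : MvPolynomial (Fin 2) F) ^ (n - 1) *
        (pderiv 0 a + X 1 * pderiv 1 b - C ((n : F) - 1) * b) = 0 := by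
      have := h
      unfold d2 at this
      simp only at this
      linear_combination this
    have hX : (X 1 : MvPolynomial (Fin 2) F) ^ (n - 1) ≠ 0 :=
      pow_ne_zero _ (X_ne_zero 1)
    have := (mul_eq_zero.1 h').resolve_left hX
    linear_combination this
  obtain ⟨α, hα⟩ := exists_alpha F a
  refine ⟨(b, α), ?_, ?_⟩
  · show (a, b) = mu F n b + (Polynomial.aeval (X 1 : MvPolynomial (Fin 2) F) α, 0)
    unfold mu
    refine Prod.ext ?_ (by simp)
    show a = antiX F (C ((n : F) - 1) * b - X 1 * pderiv 1 b) +
      Polynomial.aeval (X 1 : MvPolynomial (Fin 2) F) α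
    rw [← key]; exact hα
  · rintro ⟨b', α'⟩ hq
    have hb : b = b' := by
      have := congrArg Prod.snd hq
      simpa [mu] using this
    have ha : a = antiX F (C ((n : F) - 1) * b' - X 1 * pderiv 1 b') +
        Polynomial.aeval (X 1 : MvPolynomial (Fin 2) F) α' := by
      have := congrArg Prod.fst hq
      simpa [mu] using this
    rw [← hb] at ha
    have hαα : Polynomial.aeval (X 1 : MvPolynomial (Fin 2) F) α' =
        Polynomial.aeval (X 1 : MvPolynomial (Fin 2) F) α := by
      have := hα.symm.trans ha
      rw [← key] at this
      exact (add_left_cancel this).symm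
    have : α' = α := aeval_X1_injective F hαα
    simp [this, hb]
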